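/- Let X be a non-negative absolutely continuous random variable with density f_X and distribution function F_X, and let Y = φ(X), where φ is strictly decreasing, continuous and differentiable with derivative φ'. Then for all t in the support of Y, the weighted residual entropy of Y satisfies H^w_Y(t) = H̄^{w,φ}(φ^{-1}(t)) + E[φ(X) log(-φ'(X)) | X ≤ φ^{-1}(t)], where H̄^{w,φ}(s) = -(1/F_X(s)) ∫_0^s φ(x) f_X(x) log(f_X(x)/F_X(s)) dx. -/

import Mathlib

open MeasureTheory

/-- Survival function `F̄(t) = ∫_t^∞ f(x) dx` of a density `f`. -/
noncomputable def survFn (f : ℝ → ℝ) (t : ℝ) : ℝ := ∫ x in Set.Ioi t, f x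

/-- Distribution function `F(t) = ∫_{-∞}^t f(x) dx` of a density `f`. -/
noncomputable def distFn (f : ℝ → ℝ) (t : ℝ) : ℝ := ∫ x in Set.Iic t, f x

/-- Residual entropy `H(t) = -∫_t^∞ (f(x)/F̄(t)) log (f(x)/F̄(t)) dx`. -/
noncomputable def resEnt (f : ℝ → ℝ) (t : ℝ) : ℝ :=
  -∫ x in Set.Ioi t, f x / survFn f t * Real.log (f x / survFn f t)

/-- Weighted residual entropy `H^w(t) = -∫_t^∞ x (f(x)/F̄(t)) log (f(x)/F̄(t)) dx`. -/
noncomputable def wResEnt (f : ℝ → ℝ) (t : ℝ) : ℝ :=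
  -∫ x in Set.Ioi t, x * (f x / survFn f t) * Real.log (f x / survFn f t)

/-- Past entropy `H̄(t) = -∫_0^t (f(x)/F(t)) log (f(x)/F(t)) dx`. -/
noncomputable def pastEnt (f : ℝ → ℝ) (t : ℝ) : ℝ :=
  -∫ x in Set.Ioc 0 t, f x / distFn f t * Real.log (f x / distFn f t)

/-- Weighted past entropy `H̄^w(t) = -∫_0^t x (f(x)/F(t)) log (f(x)/F(t)) dx`. -/
noncomputable def wPastEnt (f : ℝ → ℝ) (t : ℝ) : ℝ :=
  -∫ x in Set.Ioc 0 t, x * (f x / distFn f t) * Real.log (f x / distFn f t)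

/-- The support `S = (0, ν)` (with `ν ≤ +∞`) as a subset of `ℝ`. -/
def supS (ν : EReal) : Set ℝ := {x : ℝ | 0 < x ∧ (x : EReal) < ν}

/-- Let `X` be a non-negative absolutely continuous random variable
with density `f` and distribution function `F_X`, and let `Y = φ(X)` with `φ` strictly
decreasing, continuous and differentiable with derivative `φ'` (and inverse `ψ`), so
that `Y` has density `y ↦ f(ψ y) / |φ'(ψ y)|`. Then for all `t` in the support of `Y`,
`H^w_Y(t) = H̄^{w,φ}(φ⁻¹(t)) + E[φ(X) log(-φ'(X)) | X ≤ φ⁻¹(t)]`, where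
`H̄^{w,φ}(s) = -(1/F_X(s)) ∫_0^s φ(x) f_X(x) log (f_X(x)/F_X(s)) dx`. -/
theorem wResEnt_comp_strictAnti (f φ φ' ψ : ℝ → ℝ) (t : ℝ)
    (hf_nonneg : ∀ x, 0 ≤ f x) (hf_supp : ∀ x, x ≤ 0 → f x = 0)
    (hf_dens : ∫ x, f x = 1)
    (hφ_anti : StrictAnti φ) (hφ_cont : Continuous φ)
    (hφ_deriv : ∀ x, HasDerivAt φ (φ' x) x) (hφ'_neg : ∀ x, φ' x < 0)
    (hψ_left : ∀ x, ψ (φ x) = x) (hψ_right : ∀ y, φ (ψ y) = y)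
    (ht : 0 < distFn f (ψ t))
    (hint1 : IntegrableOn (fun x => φ x * f x * Real.log (f x)) (Set.Ioc 0 (ψ t)))
    (hint2 : IntegrableOn (fun x => φ x * Real.log (-φ' x) * f x) (Set.Ioc 0 (ψ t)))
    (hint3 : IntegrableOn (fun x => φ x * f x) (Set.Ioc 0 (ψ t))) :
    wResEnt (fun y => f (ψ y) / |φ' (ψ y)|) t
      = -(1 / distFn f (ψ t))
            * (∫ x in Set.Ioc 0 (ψ t), φ x * f x * Real.log (f x / distFn f (ψ t)))
        + (1 / distFn f (ψ t))
            * ∫ x in Set.Ioc 0 (ψ t), φ x * Real.log (-φ' x) * f x := by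
  set s := ψ t with hs
  set F := distFn f s with hFdef
  have hFne : F ≠ 0 := ht.ne'
  have habs : ∀ x, |φ' x| = -φ' x := fun x => abs_of_neg (hφ'_neg x)
  have habsne : ∀ x, |φ' x| ≠ 0 := fun x => (abs_pos.mpr (hφ'_neg x).ne).ne'
  have hinj : Set.InjOn φ (Set.Iio s) := hφ_anti.injective.injOn
  have hderiv : ∀ x ∈ Set.Iio s, HasDerivWithinAt φ (φ' x) (Set.Iio s) x :=
    fun x _ => (hφ_deriv x).hasDerivWithinAt
  have himg : φ '' Set.Iio s = Set.Ioi t := by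
    ext y
    constructor
    · rintro ⟨x, hx, rfl⟩
      have h1 : φ s < φ x := hφ_anti hx
      have h2 : φ s = t := hψ_right t
      simpa [h2] using h1
    · intro hy
      refine ⟨ψ y, ?_, hψ_right y⟩
      by_contra h
      simp only [Set.mem_Iio, not_lt] at h
      have h2 := hφ_anti.antitone h
      simp only [hψ_right] at h2
      exact absurd (lt_of_lt_of_le (by simpa [hs, hψ_right] using hy) h2) (lt_irrefl _)
  -- survival function of Y equals F
  have hF : survFn (fun y => f (ψ y) / |φ' (ψ y)|) t = F := by
    rw [survFn, ← himg,
      integral_image_eq_integral_abs_deriv_smul measurableSet_Iio hderiv hinj]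
    have h1 : ∀ x, |φ' x| • (f (ψ (φ x)) / |φ' (ψ (φ x))|) = f x := by
      intro x
      rw [hψ_left, smul_eq_mul]
      rw [mul_comm]
      exact div_mul_cancel₀ _ (habsne x)
    simp_rw [h1]
    rw [hFdef, distFn, setIntegral_congr_set Iio_ae_eq_Iic]
  -- main change of variables
  rw [wResEnt, hF, ← himg,
    integral_image_eq_integral_abs_deriv_smul measurableSet_Iio hderiv hinj]
  have key : ∀ x, |φ' x| • (φ x * (f (ψ (φ x)) / |φ' (ψ (φ x))| / F) *
      Real.log (f (ψ (φ x)) / |φ' (ψ (φ x))| / F))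
      = φ x * (f x / F) * Real.log (f x / (|φ' x| * F)) := by
    intro x
    rw [hψ_left, smul_eq_mul, div_div]
    have h2 : |φ' x| * (f x / (|φ' x| * F)) = f x / F := by
      rw [mul_comm (|φ' x|) F, ← div_div, mul_comm, div_mul_cancel₀ _ (habsne x)]
    linear_combination (φ x * Real.log (f x / (|φ' x| * F))) * h2
  simp_rw [key]
  rw [setIntegral_congr_set Iio_ae_eq_Iic]
  set g : ℝ → ℝ := fun x => φ x * (f x / F) * Real.log (f x / (|φ' x| * F)) with hg
  -- restrict from Iic s to Ioc 0 s
  have hstep : ∫ x in Set.Iic s, g x = ∫ x in Set.Ioc 0 s, g x := by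
    have h1 : ∫ x in Set.Iic s, g x = ∫ x in Set.Iic s, (Set.Ioc 0 s).indicator g x := by
      apply setIntegral_congr_fun measurableSet_Iic
      intro x hx
      rcases le_or_gt x 0 with h | h
      · rw [Set.indicator_of_notMem (fun hmem => absurd hmem.1 (not_lt.mpr h))]
        simp [hg, hf_supp x h]
      · rw [Set.indicator_of_mem (Set.mem_Ioc.mpr ⟨h, hx⟩)]
    rw [h1, setIntegral_indicator measurableSet_Ioc,
      Set.inter_eq_self_of_subset_right Set.Ioc_subset_Iic_self]
  rw [hstep]
  -- pointwise split of the integrand on Ioc 0 s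
  have hsplit : ∀ x ∈ Set.Ioc 0 s, g x
      = (1 / F) * (φ x * f x * Real.log (f x / F))
        - (1 / F) * (φ x * Real.log (-φ' x) * f x) := by
    intro x _
    rcases eq_or_lt_of_le (hf_nonneg x) with h | h
    · simp [hg, ← h]
    · have hfne : f x ≠ 0 := h.ne'
      have hFabs : |φ' x| * F ≠ 0 := mul_ne_zero (habsne x) hFne
      rw [hg]
      simp only
      rw [Real.log_div hfne hFabs, Real.log_mul (habsne x) hFne,
        Real.log_div hfne hFne, habs]
      field_simp
      ring
  rw [setIntegral_congr_fun measurableSet_Ioc hsplit]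
  -- integrability
  have hfun : (fun x => φ x * f x * Real.log (f x / F))
      = fun x => φ x * f x * Real.log (f x) - Real.log F * (φ x * f x) := by
    funext x
    rcases eq_or_lt_of_le (hf_nonneg x) with h | h
    · simp [← h]
    · rw [Real.log_div h.ne' hFne]; ring
  have hintA : IntegrableOn (fun x => φ x * f x * Real.log (f x / F)) (Set.Ioc 0 s) := by
    rw [hfun]; exact hint1.sub (hint3.const_mul (Real.log F))
  rw [integral_sub ((hintA.const_mul (1 / F))) ((hint2.const_mul (1 / F))),
    integral_const_mul, integral_const_mul]
  ring
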